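/- For any unit-norm sequence F = {f_n}_{n=1}^N in C^M, the frame potential FP(F) = ∑_{n,n'} |⟨f_n, f_{n'}⟩|^2 satisfies FP(F) = N²/M + ‖FF* − (N/M)I‖_HS², where ‖·‖_HS is the Hilbert–Schmidt (Frobenius) norm. -/

import Mathlib

noncomputable section
open scoped InnerProductSpace

/-- The `n`-th column of `F`, as a vector in `ℂ^M`. -/
def col {M N : ℕ} (F : Matrix (Fin M) (Fin N) ℂ) (n : Fin N) : EuclideanSpace ℂ (Fin M) :=
  (WithLp.equiv 2 (Fin M → ℂ)).symm (fun m => F m n)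

/-- Squared Hilbert–Schmidt (Frobenius) norm. -/
def hsq {M N : ℕ} (A : Matrix (Fin M) (Fin N) ℂ) : ℝ := ∑ i, ∑ j, ‖A i j‖ ^ 2

/-- The frame potential. -/
def FP {M N : ℕ} (F : Matrix (Fin M) (Fin N) ℂ) : ℝ :=
  ∑ n : Fin N, ∑ n' : Fin N, ‖⟪col F n, col F n'⟫_ℂ‖ ^ 2

lemma inner_col_eq {M N : ℕ} (F : Matrix (Fin M) (Fin N) ℂ) (n n' : Fin N) :
    ⟪col F n, col F n'⟫_ℂ = (F.conjTranspose * F) n n' := by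
  simp [col, Matrix.mul_apply, Matrix.conjTranspose_apply, PiLp.inner_apply,
    RCLike.inner_apply]
  exact Finset.sum_congr rfl (fun _ _ => mul_comm _ _)

lemma hsq_eq_trace {m n : ℕ} (A : Matrix (Fin m) (Fin n) ℂ) :
    hsq A = (Matrix.trace (A * A.conjTranspose)).re := by
  simp [hsq, Matrix.trace, Matrix.diag, Matrix.mul_apply, Matrix.conjTranspose_apply,
    Complex.mul_conj, ← Complex.sq_norm, ← Complex.ofReal_pow]

theorem frame_potential_eq
    (M N : ℕ) (hM : 0 < M) (F : Matrix (Fin M) (Fin N) ℂ)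
    (hunit : ∀ n : Fin N, ‖col F n‖ = 1) :
    FP F = (N : ℝ) ^ 2 / M
      + hsq (F * F.conjTranspose - ((N : ℂ) / M) • (1 : Matrix (Fin M) (Fin M) ℂ)) := by
  have hMR : (M : ℝ) ≠ 0 := Nat.cast_ne_zero.mpr hM.ne'
  have hMC : (M : ℂ) ≠ 0 := Nat.cast_ne_zero.mpr hM.ne'
  set G : Matrix (Fin M) (Fin M) ℂ := F * F.conjTranspose with hGdef
  set c : ℂ := (N : ℂ) / M with hcdef
  have hcconj : (starRingEnd ℂ) c = c := by
    simp [hcdef, ← Complex.ofReal_natCast]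
  have hGH : G.conjTranspose = G := by
    simp [hGdef, Matrix.conjTranspose_mul]
  have htr : Matrix.trace G = (N : ℂ) := by
    rw [hGdef, Matrix.trace_mul_comm]
    have h1 : ∀ n : Fin N, (F.conjTranspose * F) n n = 1 := by
      intro n
      rw [← inner_col_eq, inner_self_eq_norm_sq_to_K, hunit n]
      norm_num
    simp [Matrix.trace, Matrix.diag, h1]
  have hFP : FP F = hsq G := by
    have h1 : FP F = hsq (F.conjTranspose * F) := by
      simp only [FP, hsq, inner_col_eq]
    rw [h1, hsq_eq_trace, hsq_eq_trace, hGH]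
    have h2 : (F.conjTranspose * F).conjTranspose = F.conjTranspose * F := by
      simp [Matrix.conjTranspose_mul]
    rw [h2]
    rw [show F.conjTranspose * F * (F.conjTranspose * F)
        = F.conjTranspose * (F * F.conjTranspose * F) by
      simp [Matrix.mul_assoc]]
    rw [Matrix.trace_mul_comm]
    rw [show F * F.conjTranspose * F * F.conjTranspose = G * G by
      simp [hGdef, Matrix.mul_assoc]]
  have hexp : hsq (G - c • 1) = hsq G - (N : ℝ) ^ 2 / M := by
    rw [hsq_eq_trace]
    have hAH : (G - c • 1).conjTranspose = G - c • 1 := by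
      simp [Matrix.conjTranspose_smul, hGH, hcconj]
    rw [hAH]
    have hmul : (G - c • 1) * (G - c • 1)
        = G * G - c • G - c • G + (c * c) • (1 : Matrix (Fin M) (Fin M) ℂ) := by
      simp only [sub_mul, mul_sub, Matrix.smul_mul, Matrix.mul_smul, smul_smul,
        Matrix.mul_one, Matrix.one_mul, smul_sub, sub_smul]
      abel
    rw [hmul]
    simp only [Matrix.trace_add, Matrix.trace_sub, Matrix.trace_smul, htr,
      Matrix.trace_one, Fintype.card_fin, smul_eq_mul]
    have hcN : c * (N : ℂ) = (((N : ℝ) ^ 2 / M : ℝ) : ℂ) := by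
      rw [hcdef]; push_cast; field_simp
    have hcc : c * c * (M : ℂ) = (((N : ℝ) ^ 2 / M : ℝ) : ℂ) := by
      rw [hcdef]; push_cast; field_simp
    rw [hcN, hcc]
    have hsqG : hsq G = (Matrix.trace (G * G)).re := by
      rw [hsq_eq_trace, hGH]
    simp only [Complex.sub_re, Complex.add_re, Complex.ofReal_re, hsqG]
    ring
  rw [hFP, hexp]
  ring
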